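/- Let γ = ⟨v₀, v₁, ..., v_m⟩ with m ≥ 2 be a closed path in the Farey graph over ℤ (vertices reduced fractions a/b including 1/0, edges between a/b and c/d iff |ad-bc|=1), with v₀ = 1/0. If for every i with 1 ≤ i < m, v_{i+1} ≠ v_{i-1} and v_{i-1}, v_i, v_{i+1} are not mutually adjacent, then writing vᵢ = aᵢ/bᵢ with aᵢ₊₁ = λᵢaᵢ - aᵢ₋₁, bᵢ₊₁ = λᵢbᵢ - bᵢ₋₁, all λᵢ satisfy |λᵢ| ≥ 2, and the sequence |b₀|, |b₁|, ..., |b_m| is strictly increasing from index 1 on; hence v_m ≠ v₀, a contradiction. Conclude: every closed path in the Farey graph over ℤ admits an elementary homotopy (removal of a spur or an elementary deformation across a triangle), i.e., every closed path is strongly contractible. -/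

import Mathlib

/-- Coprime pairs of integers up to sign: vertices of the Farey graph 𝓕_ℤ
(non-coprime classes are isolated and never occur on edges). -/
def FareySetoid : Setoid (ℤ × ℤ) where
  r p q := q = p ∨ q = (-p.1, -p.2)
  iseqv := by
    constructor
    · intro p; exact Or.inl rfl
    · rintro p q (rfl | rfl)
      · exact Or.inl rfl
      · right; simp
    · rintro p q r (rfl | rfl) (rfl | rfl)
      · exact Or.inl rfl
      · right; rfl
      · right; rfl
      · left; simp

def FareyVertex : Type := Quotient FareySetoid

/-- Adjacency in the Farey graph over ℤ: two classes are adjacent iff they have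
coprime representatives `(a,b)`, `(c,d)` with `a*d - b*c = ±1`. -/
def FareyAdj (u v : FareyVertex) : Prop :=
  ∃ p q : ℤ × ℤ, Quotient.mk FareySetoid p = u ∧ Quotient.mk FareySetoid q = v ∧
    IsCoprime p.1 p.2 ∧ IsCoprime q.1 q.2 ∧
    (p.1 * q.2 - p.2 * q.1 = 1 ∨ p.1 * q.2 - p.2 * q.1 = -1)

/-- Elementary homotopies of paths in the Farey graph: removal of a spur, or an
elementary deformation across a triangle. -/
inductive FareyHomotopy : List FareyVertex → List FareyVertex → Prop
  | spur (l₁ l₂ : List FareyVertex) (u v : FareyVertex) (h : FareyAdj v u) :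
      FareyHomotopy (l₁ ++ v :: u :: v :: l₂) (l₁ ++ v :: l₂)
  | tri (l₁ l₂ : List FareyVertex) (u v w : FareyVertex)
      (h1 : FareyAdj u v) (h2 : FareyAdj v w) (h3 : FareyAdj u w) :
      FareyHomotopy (l₁ ++ u :: v :: w :: l₂) (l₁ ++ u :: w :: l₂)

/-- A closed path: nonempty, consecutive vertices adjacent, first vertex = last vertex. -/
def IsClosedFareyPath (l : List FareyVertex) : Prop :=
  l ≠ [] ∧ l.Chain' FareyAdj ∧ l.head? = l.getLast?

namespace Farey

abbrev mkF (p : ℤ × ℤ) : FareyVertex := Quotient.mk FareySetoid p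

def dt (p q : ℤ × ℤ) : ℤ := p.1 * q.2 - p.2 * q.1

lemma mkF_neg (p : ℤ × ℤ) : mkF (-p.1, -p.2) = mkF p :=
  Quotient.sound (Or.inr (by simp))

lemma mkF_eq {p q : ℤ × ℤ} (h : mkF p = mkF q) : q = p ∨ q = (-p.1, -p.2) :=
  Quotient.exact h

lemma coprime_of_dt {p q : ℤ × ℤ} (h : dt p q = 1 ∨ dt p q = -1) :
    IsCoprime p.1 p.2 ∧ IsCoprime q.1 q.2 := by
  unfold dt at h
  rcases h with h | h
  · exact ⟨⟨q.2, -q.1, by linarith⟩, ⟨-p.2, p.1, by linarith⟩⟩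
  · exact ⟨⟨-q.2, q.1, by linarith⟩, ⟨p.2, -p.1, by linarith⟩⟩

lemma adj_mk {p q : ℤ × ℤ} (hd : dt p q = 1 ∨ dt p q = -1) : FareyAdj (mkF p) (mkF q) :=
  ⟨p, q, rfl, rfl, (coprime_of_dt hd).1, (coprime_of_dt hd).2, hd⟩

lemma adj_elim {p q : ℤ × ℤ} (h : FareyAdj (mkF p) (mkF q)) : dt p q = 1 ∨ dt p q = -1 := by
  obtain ⟨p', q', hp, hq, _, _, hd⟩ := h
  have hp' := mkF_eq hp
  have hq' := mkF_eq hq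
  have hd' : dt p' q' = 1 ∨ dt p' q' = -1 := hd
  rcases hp' with rfl | rfl <;> rcases hq' with rfl | rfl <;>
    simp only [dt] at hd' ⊢ <;> rcases hd' with h | h <;>
    first
      | (left; linarith) | (right; linarith)

lemma adj_rep {p : ℤ × ℤ} {v : FareyVertex} (h : FareyAdj (mkF p) v) :
    ∃ q, mkF q = v ∧ dt p q = 1 := by
  obtain ⟨q0, rfl⟩ := Quotient.exists_rep v
  have hd := adj_elim (p := p) (q := q0) h
  rcases hd with hd | hd
  · exact ⟨q0, rfl, hd⟩
  · refine ⟨(-q0.1, -q0.2), mkF_neg q0, ?_⟩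
    simp only [dt] at hd ⊢; linarith

lemma not_adj_self (v : FareyVertex) : ¬ FareyAdj v v := by
  obtain ⟨p, rfl⟩ := Quotient.exists_rep v
  intro h
  rcases adj_elim h with h | h <;> simp only [dt] at h <;> nlinarith [h]

open Classical in
noncomputable def reps (v : ℕ → FareyVertex) : ℕ → ℤ × ℤ
  | 0 => (1, 0)
  | i + 1 =>
    if h : ∃ q, mkF q = v (i+1) ∧ dt (reps v i) q = 1 then h.choose else (1, 0)

lemma reps_succ {v : ℕ → FareyVertex} {i : ℕ} (hv : mkF (reps v i) = v i)
    (hadj : FareyAdj (v i) (v (i+1))) :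
    mkF (reps v (i+1)) = v (i+1) ∧ dt (reps v i) (reps v (i+1)) = 1 := by
  rw [← hv] at hadj
  have h : ∃ q, mkF q = v (i+1) ∧ dt (reps v i) q = 1 := adj_rep hadj
  rw [reps, dif_pos h]
  exact h.choose_spec

/-- Linear recurrence: two consecutive unit determinants force r = λ q - p. -/
lemma lin_rec {p q r : ℤ × ℤ} (h1 : dt p q = 1) (h2 : dt q r = 1) :
    r.1 = dt p r * q.1 - p.1 ∧ r.2 = dt p r * q.2 - p.2 := by
  simp only [dt] at *
  constructor
  · linear_combination (-r.1) * h1 - p.1 * h2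
  · linear_combination (-r.2) * h1 - p.2 * h2

/-- The key dichotomy: in a closed path based at ∞ with length ≥ 3, some interior
vertex admits a spur or a triangle. -/
lemma exists_shortcut (l : List FareyVertex) (hch : l.Chain' FareyAdj)
    (hcl : l.head? = l.getLast?) (hh : l.head? = some (mkF (1,0)))
    (hlen : 3 ≤ l.length) :
    ∃ i, 1 ≤ i ∧ i + 2 ≤ l.length ∧
      (l.getD (i+1) (mkF (1,0)) = l.getD (i-1) (mkF (1,0)) ∨
       FareyAdj (l.getD (i-1) (mkF (1,0))) (l.getD (i+1) (mkF (1,0)))) := by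
  by_contra hcon
  push_neg at hcon
  set d0 : FareyVertex := mkF (1,0) with hd0
  set v : ℕ → FareyVertex := fun i => l.getD i d0 with hvdef
  set m : ℕ := l.length - 1 with hm
  have hm2 : 2 ≤ m := by omega
  have hgetD : ∀ i (h : i < l.length), l.getD i d0 = l.get ⟨i, h⟩ := fun i h =>
    List.getD_eq_get l (d := d0) ⟨i, h⟩
  have hadj : ∀ i, i + 1 ≤ m → FareyAdj (v i) (v (i+1)) := by
    intro i hi
    have h1 : i < l.length - 1 := by omega
    have h2 := List.isChain_iff_getElem.mp hch i (by omega)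
    show FareyAdj (l.getD i d0) (l.getD (i+1) d0)
    rw [hgetD i (by omega), hgetD (i+1) (by omega)]
    exact h2
  have hv0 : v 0 = d0 := by
    have h0 : 0 < l.length := by omega
    have : l.head? = some (l.get ⟨0, h0⟩) := by
      cases l with
      | nil => simp at h0
      | cons a t => simp
    rw [this] at hh
    simp only [hvdef, hgetD 0 h0]
    exact Option.some_injective _ hh
  have hvm : v m = d0 := by
    have hml : m < l.length := by omega
    have : l.getLast? = some (l.get ⟨m, hml⟩) := by
      rw [List.getLast?_eq_getElem?]
      simp [← hm, List.getElem?_eq_getElem hml]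
    rw [hh] at hcl
    rw [this] at hcl
    simp only [hvdef, hgetD m hml]
    exact (Option.some_injective _ hcl).symm
  -- representatives
  have hrep : ∀ i, i ≤ m → mkF (reps v i) = v i ∧ (i + 1 ≤ m → dt (reps v i) (reps v (i+1)) = 1) := by
    intro i
    induction i with
    | zero =>
      intro _
      have h0 : mkF (reps v 0) = v 0 := by rw [hv0]; rfl
      exact ⟨h0, fun h1 => (reps_succ h0 (hadj 0 h1)).2⟩
    | succ i ih =>
      intro hi
      have hprev := ih (by omega)
      have hs := reps_succ hprev.1 (hadj i (by omega))
      exact ⟨hs.1, fun h1 => (reps_succ hs.1 (hadj (i+1) h1)).2⟩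
  -- lambda bound
  have hlam : ∀ i, 1 ≤ i → i + 1 ≤ m →
      (reps v (i+1)).1 = dt (reps v (i-1)) (reps v (i+1)) * (reps v i).1 - (reps v (i-1)).1 ∧
      (reps v (i+1)).2 = dt (reps v (i-1)) (reps v (i+1)) * (reps v i).2 - (reps v (i-1)).2 ∧
      2 ≤ |dt (reps v (i-1)) (reps v (i+1))| := by
    intro i hi1 hi2
    obtain ⟨i, rfl⟩ : ∃ j, i = j + 1 := ⟨i - 1, by omega⟩
    simp only [Nat.add_sub_cancel]
    have h1 : dt (reps v i) (reps v (i+1)) = 1 := (hrep i (by omega)).2 (by omega)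
    have h2 : dt (reps v (i+1)) (reps v (i+2)) = 1 := (hrep (i+1) (by omega)).2 (by omega)
    have hlr := lin_rec h1 h2
    refine ⟨hlr.1, hlr.2, ?_⟩
    set lam := dt (reps v i) (reps v (i+2)) with hlamd
    by_contra habs
    push_neg at habs
    rw [abs_lt] at habs
    have hcases : lam = 0 ∨ lam = 1 ∨ lam = -1 := by omega
    have hcc := hcon (i+1) (by omega) (by omega)
    simp only [Nat.add_sub_cancel] at hcc
    have hri : mkF (reps v i) = v i := (hrep i (by omega)).1
    have hri2 : mkF (reps v (i+2)) = v (i+2) := (hrep (i+2) (by omega)).1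
    rcases hcases with h0 | h1' | h1'
    · -- spur
      have hr : reps v (i+2) = (-(reps v i).1, -(reps v i).2) := by
        have e1 := hlr.1; have e2 := hlr.2
        rw [h0] at e1 e2
        simp at e1 e2
        exact Prod.ext (by simp [e1]) (by simp [e2])
      have hvvv : v (i+2) = v i := by
        rw [← hri2, hr, mkF_neg, hri]
      exact hcc.1 hvvv
    · -- triangle
      have : FareyAdj (v i) (v (i+2)) := by
        rw [← hri, ← hri2]; exact adj_mk (Or.inl h1')
      exact hcc.2 this
    · have : FareyAdj (v i) (v (i+2)) := by
        rw [← hri, ← hri2]; exact adj_mk (Or.inr h1')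
      exact hcc.2 this
  -- denominator growth
  have hb0' : reps v 0 = ((1:ℤ), (0:ℤ)) := by simp [reps]
  have hb1 : (reps v 1).2 = 1 := by
    have h1 : dt (reps v 0) (reps v 1) = 1 := (hrep 0 (by omega)).2 (by omega)
    rw [hb0'] at h1
    simp only [dt] at h1
    linarith
  have hb0 : (reps v 0).2 = 0 := by rw [hb0']
  have hgrow : ∀ i, i + 1 ≤ m → |(reps v i).2| < |(reps v (i+1)).2| := by
    intro i
    induction i with
    | zero => intro _; rw [hb0, hb1]; norm_num
    | succ i ih =>
      intro hi
      have hih := ih (by omega)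
      obtain ⟨h1, h2, h3⟩ := hlam (i+1) (by omega) (by omega)
      simp only [Nat.add_sub_cancel] at h1 h2 h3
      set lam := dt (reps v i) (reps v (i+2))
      set a := (reps v i).2
      set b := (reps v (i+1)).2
      rw [h2]
      have h4 : |lam * b| = |lam| * |b| := abs_mul lam b
      have h5 : |lam * b| - |a| ≤ |lam * b - a| := abs_sub_abs_le_abs_sub _ _
      have h6 : (2:ℤ) * |b| ≤ |lam| * |b| := mul_le_mul_of_nonneg_right h3 (abs_nonneg b)
      linarith
  have hpos : ∀ i, 1 ≤ i → i ≤ m → 1 ≤ |(reps v i).2| := by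
    intro i
    induction i with
    | zero => omega
    | succ i ih =>
      intro _ hi
      rcases Nat.eq_zero_or_pos i with rfl | hip
      · rw [hb1]; norm_num
      · have := ih hip (by omega)
        have := hgrow i (by omega)
        omega
  -- contradiction at index m
  have hrm : mkF (reps v m) = v m := (hrep m le_rfl).1
  rw [hvm, hd0] at hrm
  have := mkF_eq hrm
  have hbm : (reps v m).2 = 0 := by
    rcases this with h | h
    · rw [← h]
    · have h2 := congrArg Prod.snd h
      simp at h2
      omega
  have := hpos m (by omega) le_rfl
  rw [hbm] at this
  simp at this


section ChainHelpers
variable {α : Type*} {R : α → α → Prop}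

lemma chain'_spur {l₁ l₂ : List α} {a b : α} (h : (l₁ ++ a :: b :: a :: l₂).Chain' R) :
    (l₁ ++ a :: l₂).Chain' R := by
  simp only [List.Chain', List.isChain_append] at h ⊢
  obtain ⟨h1, h2, h3⟩ := h
  exact ⟨h1, h2.tail.tail, by simpa using h3⟩

lemma chain'_tri {l₁ l₂ : List α} {a b c : α} (h : (l₁ ++ a :: b :: c :: l₂).Chain' R)
    (hac : R a c) : (l₁ ++ a :: c :: l₂).Chain' R := by
  simp only [List.Chain', List.isChain_append] at h ⊢
  obtain ⟨h1, h2, h3⟩ := h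
  exact ⟨h1, List.isChain_cons_cons.mpr ⟨hac, h2.tail.tail⟩, by simpa using h3⟩

lemma head?_mid (l₁ l₂ l₂' : List α) (a : α) :
    (l₁ ++ a :: l₂).head? = (l₁ ++ a :: l₂').head? := by
  cases l₁ <;> simp

lemma getLast?_mid (l₁ : List α) (l₂ : List α) (a b : α) :
    (l₁ ++ a :: b :: l₂).getLast? = (l₁ ++ b :: l₂).getLast? := by
  rw [List.getLast?_append_of_ne_nil l₁ (by simp), List.getLast?_append_of_ne_nil l₁ (by simp),
    List.getLast?_cons_cons]

lemma decomp3 (l : List α) (j : ℕ) (h : j + 3 ≤ l.length) :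
    l = l.take j ++ l[j]'(by omega) :: l[j+1]'(by omega) :: l[j+2]'(by omega) :: l.drop (j+3) := by
  have hd1 : l.drop j = l[j]'(by omega) :: l.drop (j+1) := List.drop_eq_getElem_cons (by omega)
  have hd2 : l.drop (j+1) = l[j+1]'(by omega) :: l.drop (j+1+1) := List.drop_eq_getElem_cons (by omega)
  conv_lhs => rw [← List.take_append_drop j l]
  rw [hd1, hd2]
  norm_num

end ChainHelpers

lemma surgery (l : List FareyVertex) (hch : l.Chain' FareyAdj) (i : ℕ)
    (hi1 : 1 ≤ i) (hi2 : i + 2 ≤ l.length)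
    (hsc : l.getD (i+1) (mkF (1,0)) = l.getD (i-1) (mkF (1,0)) ∨
      FareyAdj (l.getD (i-1) (mkF (1,0))) (l.getD (i+1) (mkF (1,0)))) :
    ∃ l', FareyHomotopy l l' ∧ l'.Chain' FareyAdj ∧ l'.head? = l.head? ∧
      l'.getLast? = l.getLast? ∧ l'.length < l.length ∧ l' ≠ [] := by
  obtain ⟨j, rfl⟩ : ∃ j, i = j + 1 := ⟨i - 1, by omega⟩
  have hj : j + 3 ≤ l.length := by omega
  have hja : j < l.length := by omega
  have hjb : j + 1 < l.length := by omega
  have hjc : j + 2 < l.length := by omega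
  set a := l[j]'hja with ha
  set b := l[j+1]'hjb with hb
  set c := l[j+2]'hjc with hc
  have hga : l.getD (j+1-1) (mkF (1,0)) = a := by
    simp only [Nat.add_sub_cancel]
    exact List.getD_eq_getElem l _ hja
  have hgc : l.getD (j+1+1) (mkF (1,0)) = c := List.getD_eq_getElem l _ hjc
  rw [hga, hgc] at hsc
  have hL := decomp3 l j hj
  rw [← ha, ← hb, ← hc] at hL
  have hab : FareyAdj a b := by
    have := List.isChain_iff_getElem.mp hch j (by omega)
    simpa [List.get_eq_getElem] using this
  have hbc : FareyAdj b c := by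
    have := List.isChain_iff_getElem.mp hch (j+1) (by omega)
    simpa [List.get_eq_getElem] using this
  rcases hsc with hceq | hadj
  · -- spur : c = a
    rw [hceq] at hL
    refine ⟨l.take j ++ a :: l.drop (j+3), ?_, ?_, ?_, ?_, ?_, by simp⟩
    · conv_lhs => rw [hL]
      exact FareyHomotopy.spur _ _ b a hab
    · rw [hL] at hch
      exact chain'_spur hch
    · conv_rhs => rw [hL]
      exact head?_mid _ _ _ a
    · conv_rhs => rw [hL]
      rw [getLast?_mid _ _ a b, getLast?_mid _ _ b a]
    · conv_rhs => rw [hL]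
      simp
  · -- triangle
    refine ⟨l.take j ++ a :: c :: l.drop (j+3), ?_, ?_, ?_, ?_, ?_, by simp⟩
    · conv_lhs => rw [hL]
      exact FareyHomotopy.tri _ _ a b c hab hbc hadj
    · rw [hL] at hch
      exact chain'_tri hch hadj
    · conv_rhs => rw [hL]
      exact head?_mid _ _ _ a
    · conv_rhs => rw [hL]
      rw [getLast?_mid (l.take j) (l.drop (j+3)) a c,
        getLast?_mid (l.take j) (c :: l.drop (j+3)) a b,
        getLast?_mid (l.take j) (l.drop (j+3)) b c]
    · conv_rhs => rw [hL]
      simp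


lemma reduce : ∀ n (l : List FareyVertex), l.length ≤ n → IsClosedFareyPath l →
    l.head? = some (mkF (1,0)) → Relation.ReflTransGen FareyHomotopy l [mkF (1,0)] := by
  intro n
  induction n with
  | zero =>
    intro l hn hcl _
    obtain ⟨hne, -, -⟩ := hcl
    interval_cases hl : l.length
    · exact absurd (List.length_eq_zero_iff.mp hl) hne
  | succ n ih =>
    intro l hn hclosed hh
    obtain ⟨hne, hch, hcl⟩ := hclosed
    match l with
    | [] => exact absurd rfl hne
    | [x] =>
      have : x = mkF (1,0) := by simpa using hh
      rw [this]
    | [x, y] =>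
      have hxy : x = y := by simpa using hcl
      have : FareyAdj x y := (List.isChain_cons_cons.mp hch).1
      rw [hxy] at this
      exact absurd this (not_adj_self y)
    | x :: y :: z :: t =>
      have hlen : 3 ≤ (x :: y :: z :: t).length := by simp
      obtain ⟨i, hi1, hi2, hsc⟩ := exists_shortcut _ hch hcl hh hlen
      obtain ⟨l', hhom, hch', hhead', hlast', hlt, hne'⟩ := surgery _ hch i hi1 hi2 hsc
      have hrest : Relation.ReflTransGen FareyHomotopy l' [mkF (1,0)] := by
        refine ih l' (by simp at hlt hn ⊢; omega) ⟨hne', hch', ?_⟩ (hhead'.trans hh)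
        rw [hhead', hlast', hcl]
      exact Relation.ReflTransGen.head hhom hrest

/-! ## The `SL₂(ℤ)` action -/

def act (a b c d : ℤ) (p : ℤ × ℤ) : ℤ × ℤ := (a*p.1 + b*p.2, c*p.1 + d*p.2)

lemma act_resp (a b c d : ℤ) : ∀ p q : ℤ × ℤ, FareySetoid.r p q →
    FareySetoid.r (act a b c d p) (act a b c d q) := by
  rintro p q (rfl | rfl)
  · exact Or.inl rfl
  · right
    refine Prod.ext ?_ ?_ <;> simp [act] <;> ring

def actV (a b c d : ℤ) : FareyVertex → FareyVertex :=
  Quotient.map (act a b c d) (fun p q h => act_resp a b c d p q h)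

lemma actV_mk (a b c d : ℤ) (p : ℤ × ℤ) :
    actV a b c d (mkF p) = mkF (act a b c d p) := rfl

lemma dt_act {a b c d : ℤ} (hdet : a*d - b*c = 1) (p q : ℤ × ℤ) :
    dt (act a b c d p) (act a b c d q) = dt p q := by
  simp only [dt, act]
  linear_combination (p.1*q.2 - p.2*q.1) * hdet

lemma adj_act {a b c d : ℤ} (hdet : a*d - b*c = 1) {u v : FareyVertex}
    (h : FareyAdj u v) : FareyAdj (actV a b c d u) (actV a b c d v) := by
  obtain ⟨p, rfl⟩ := Quotient.exists_rep u
  obtain ⟨q, rfl⟩ := Quotient.exists_rep v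
  have hd := adj_elim h
  rw [actV_mk, actV_mk]
  refine adj_mk ?_
  rw [dt_act hdet]
  exact hd

lemma hom_act {a b c d : ℤ} (hdet : a*d - b*c = 1) {l l' : List FareyVertex}
    (h : FareyHomotopy l l') :
    FareyHomotopy (l.map (actV a b c d)) (l'.map (actV a b c d)) := by
  cases h with
  | spur l₁ l₂ u v hadj =>
    simpa [List.map_append] using
      FareyHomotopy.spur (l₁.map (actV a b c d)) (l₂.map (actV a b c d)) _ _ (adj_act hdet hadj)
  | tri l₁ l₂ u v w h1 h2 h3 =>
    simpa [List.map_append] using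
      FareyHomotopy.tri (l₁.map (actV a b c d)) (l₂.map (actV a b c d)) _ _ _
        (adj_act hdet h1) (adj_act hdet h2) (adj_act hdet h3)

lemma rtg_act {a b c d : ℤ} (hdet : a*d - b*c = 1) {l l' : List FareyVertex}
    (h : Relation.ReflTransGen FareyHomotopy l l') :
    Relation.ReflTransGen FareyHomotopy (l.map (actV a b c d)) (l'.map (actV a b c d)) :=
  Relation.ReflTransGen.lift (List.map (actV a b c d)) (fun _ _ hh => hom_act hdet hh) _ _ h

lemma act_inv {a b c d : ℤ} (hdet : a*d - b*c = 1) (p : ℤ × ℤ) :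
    act d (-b) (-c) a (act a b c d p) = p := by
  refine Prod.ext ?_ ?_ <;> simp [act]
  · linear_combination p.1 * hdet
  · linear_combination p.2 * hdet

lemma actV_inv {a b c d : ℤ} (hdet : a*d - b*c = 1) (v : FareyVertex) :
    actV d (-b) (-c) a (actV a b c d v) = v := by
  obtain ⟨p, rfl⟩ := Quotient.exists_rep v
  rw [actV_mk, actV_mk, act_inv hdet]

lemma closed_act {a b c d : ℤ} (hdet : a*d - b*c = 1) {l : List FareyVertex}
    (h : IsClosedFareyPath l) : IsClosedFareyPath (l.map (actV a b c d)) := by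
  obtain ⟨hne, hch, hcl⟩ := h
  refine ⟨by simp [hne], ?_, ?_⟩
  · exact (List.isChain_map _).mpr (hch.imp (fun _ _ hh => adj_act hdet hh))
  · rw [List.head?_map, List.getLast?_map, hcl]

end Farey

/-- Every closed path in the Farey graph over ℤ is strongly contractible. -/

theorem closed_farey_paths_strongly_contractible (l : List FareyVertex)
    (hl : IsClosedFareyPath l) :
    ∃ v : FareyVertex, Relation.ReflTransGen FareyHomotopy l [v] := by
  obtain ⟨hne, hch, hcl⟩ := hl
  rcases l with _ | ⟨x, t0⟩
  · exact absurd rfl hne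
  rcases t0 with _ | ⟨y, t⟩
  · exact ⟨x, Relation.ReflTransGen.refl⟩
  have hadj : FareyAdj x y := (List.isChain_cons_cons.mp hch).1
  obtain ⟨p, q, hp, hq, hcp, -, -⟩ := hadj
  obtain ⟨u, w, huw⟩ := hcp
  have hdet : u * p.1 - w * (-p.2) = 1 := by linarith
  set f := Farey.actV u w (-p.2) p.1 with hf
  have hdet2 : p.1 * u - (-w) * (-(-p.2)) = 1 := by linear_combination huw
  set g := Farey.actV p.1 (-w) (-(-p.2)) u with hg
  have hmapped : ((x :: y :: t).map f).head? = some (Farey.mkF (1,0)) := by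
    rw [List.head?_map]
    simp only [List.head?_cons, Option.map_some]
    congr 1
    rw [← hp, hf, Farey.actV_mk]
    congr 1
    refine Prod.ext ?_ ?_ <;> simp [Farey.act] <;> linarith
  have hclosed' := Farey.closed_act hdet (l := x :: y :: t) ⟨hne, hch, hcl⟩
  have hred := Farey.reduce ((x :: y :: t).map f).length _ le_rfl hclosed' hmapped
  have hback := Farey.rtg_act hdet2 hred
  rw [List.map_map] at hback
  have hid : ((x :: y :: t).map (g ∘ f)) = x :: y :: t := by
    conv_rhs => rw [← List.map_id (x :: y :: t)]
    exact List.map_congr_left (fun z _ => Farey.actV_inv hdet z)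
  rw [hid] at hback
  exact ⟨_, by simpa using hback⟩
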